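/- Conditional weak typicality: let p_X be a probability distribution on a finite set 𝒳 and p_{Y|X}(·|x) a probability distribution on a finite set 𝒴 for each x ∈ 𝒳, with conditional Shannon entropy H(Y|X) = −Σ_{x,y} p_X(x) p_{Y|X}(y|x) log₂ p_{Y|X}(y|x). For every ε > 0 and δ > 0 there exists N such that for every n ≥ N, if (X₁,Y₁), …, (X_n,Y_n) are drawn i.i.d. with X_i ∼ p_X and Y_i ∼ p_{Y|X}(·|X_i), then the probability that |−(1/n) Σ_{i=1}^n log₂ p_{Y|X}(Y_i|X_i) − H(Y|X)| ≤ δ is at least 1 − ε. -/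

import Mathlib

noncomputable section
open Classical

section Aux
variable {S : Type*} [Fintype S]
variable {S : Type*} [Fintype S]

lemma sum_prod_fn (n : ℕ) (F : Fin n → S → ℝ) :
    ∑ ω : Fin n → S, ∏ i, F i (ω i) = ∏ i, ∑ s, F i s := by
  rw [Finset.prod_univ_sum, Fintype.piFinset_univ]

lemma sum_prod_mul (n : ℕ) (w g : S → ℝ) (hw : ∑ s, w s = 1) (i : Fin n) :
    ∑ ω : Fin n → S, (∏ j, w (ω j)) * g (ω i) = ∑ s, w s * g s := by
  have key : ∀ ω : Fin n → S, (∏ j, w (ω j)) * g (ω i)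
      = ∏ j, (w (ω j) * if j = i then g (ω j) else 1) := by
    intro ω
    rw [Finset.prod_mul_distrib, Finset.prod_ite_eq' Finset.univ i (fun j => g (ω j))]
    simp
  simp_rw [key]
  rw [sum_prod_fn n (fun j s => w s * if j = i then g s else 1)]
  have h2 : ∀ j : Fin n, (∑ s, w s * if j = i then g s else 1)
      = if j = i then ∑ s, w s * g s else 1 := by
    intro j; by_cases h : j = i <;> simp [h, hw]
  simp_rw [h2]
  rw [Finset.prod_ite_eq' Finset.univ i (fun _ => ∑ s, w s * g s)]
  simp

lemma sum_prod_mul_pair (n : ℕ) (w g : S → ℝ) (hw : ∑ s, w s = 1) (i j : Fin n)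
    (hij : i ≠ j) :
    ∑ ω : Fin n → S, (∏ k, w (ω k)) * (g (ω i) * g (ω j))
      = (∑ s, w s * g s) * (∑ s, w s * g s) := by
  have key : ∀ ω : Fin n → S, (∏ k, w (ω k)) * (g (ω i) * g (ω j))
      = ∏ k, (w (ω k) * ((if k = i then g (ω k) else 1) * (if k = j then g (ω k) else 1))) := by
    intro ω
    rw [Finset.prod_mul_distrib, Finset.prod_mul_distrib,
      Finset.prod_ite_eq' Finset.univ i (fun k => g (ω k)),
      Finset.prod_ite_eq' Finset.univ j (fun k => g (ω k))]
    simp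
  simp_rw [key]
  rw [sum_prod_fn n (fun k s => w s * ((if k = i then g s else 1) * (if k = j then g s else 1)))]
  have h2 : ∀ k : Fin n, (∑ s, w s * ((if k = i then g s else 1) * (if k = j then g s else 1)))
      = (if k = i then ∑ s, w s * g s else 1) * (if k = j then ∑ s, w s * g s else 1) := by
    intro k
    by_cases h1 : k = i
    · subst h1; simp [hij, hw]
    · by_cases h3 : k = j <;> simp [h1, h3, hw, hij.symm]
  simp_rw [h2]
  rw [Finset.prod_mul_distrib,
    Finset.prod_ite_eq' Finset.univ i (fun _ => ∑ s, w s * g s),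
    Finset.prod_ite_eq' Finset.univ j (fun _ => ∑ s, w s * g s)]
  simp

lemma sum_prod_sq (n : ℕ) (w g : S → ℝ) (hw : ∑ s, w s = 1)
    (hg : ∑ s, w s * g s = 0) :
    ∑ ω : Fin n → S, (∏ k, w (ω k)) * (∑ i, g (ω i)) ^ 2
      = n * ∑ s, w s * g s ^ 2 := by
  have expand : ∀ ω : Fin n → S, (∏ k, w (ω k)) * (∑ i, g (ω i)) ^ 2
      = ∑ i, ∑ j, (∏ k, w (ω k)) * (g (ω i) * g (ω j)) := by
    intro ω
    rw [sq, Finset.sum_mul_sum, Finset.mul_sum]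
    exact Finset.sum_congr rfl fun i _ => by rw [Finset.mul_sum]
  simp_rw [expand]
  rw [Finset.sum_comm]
  have swap2 : ∀ i : Fin n, ∑ ω : Fin n → S, ∑ j, (∏ k, w (ω k)) * (g (ω i) * g (ω j))
      = ∑ j, ∑ ω : Fin n → S, (∏ k, w (ω k)) * (g (ω i) * g (ω j)) :=
    fun i => Finset.sum_comm
  simp_rw [swap2]
  have inner : ∀ i j : Fin n, ∑ ω : Fin n → S, (∏ k, w (ω k)) * (g (ω i) * g (ω j))
      = if i = j then ∑ s, w s * g s ^ 2 else 0 := by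
    intro i j
    by_cases h : i = j
    · subst h
      rw [if_pos rfl]
      have := sum_prod_mul n w (fun s => g s * g s) hw i
      simpa [sq] using this
    · rw [if_neg h, sum_prod_mul_pair n w g hw i j h, hg, mul_zero]
  simp_rw [inner]
  simp [Finset.sum_ite_eq, mul_comm]

lemma weak_lln (w g : S → ℝ) (hw0 : ∀ s, 0 ≤ w s) (hw : ∑ s, w s = 1)
    (ε δ : ℝ) (hε : 0 < ε) (hδ : 0 < δ) :
    ∃ N : ℕ, 1 ≤ N ∧ ∀ n ≥ N,
      1 - ε ≤ ∑ ω : Fin n → S,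
        (if |∑ i, (g (ω i) - ∑ s, w s * g s)| ≤ n * δ then ∏ k, w (ω k) else 0) := by
  set μ := ∑ s, w s * g s with hμ
  set D : S → ℝ := fun s => g s - μ with hD
  set σ2 := ∑ s, w s * D s ^ 2 with hσ2
  have hD0 : ∑ s, w s * D s = 0 := by
    simp only [hD, mul_sub]
    rw [Finset.sum_sub_distrib, ← Finset.sum_mul, hw, one_mul, ← hμ, sub_self]
  have hσ2nn : 0 ≤ σ2 := Finset.sum_nonneg fun s _ => mul_nonneg (hw0 s) (sq_nonneg _)
  refine ⟨max 1 ⌈σ2 / (ε * δ ^ 2)⌉₊, le_max_left _ _, fun n hn => ?_⟩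
  have hn1 : 1 ≤ n := le_trans (le_max_left _ _) hn
  have hnR : (0:ℝ) < n := by exact_mod_cast hn1
  have hεδ : (0:ℝ) < ε * δ ^ 2 := mul_pos hε (pow_pos hδ 2)
  have hσn : σ2 ≤ n * (ε * δ ^ 2) := by
    have h1 : (⌈σ2 / (ε * δ ^ 2)⌉₊ : ℝ) ≤ n := by
      exact_mod_cast le_trans (le_max_right _ _) hn
    have h2 : σ2 / (ε * δ ^ 2) ≤ n := le_trans (Nat.le_ceil _) h1
    calc σ2 = σ2 / (ε * δ ^ 2) * (ε * δ ^ 2) := by field_simp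
      _ ≤ n * (ε * δ ^ 2) := mul_le_mul_of_nonneg_right h2 hεδ.le
  have hWnn : ∀ ω : Fin n → S, 0 ≤ ∏ k, w (ω k) :=
    fun ω => Finset.prod_nonneg fun k _ => hw0 (ω k)
  have htot : ∑ ω : Fin n → S, ∏ k, w (ω k) = 1 := by
    rw [sum_prod_fn n (fun _ s => w s)]
    simp [hw]
  have hvar := sum_prod_sq n w D hw hD0
  set Bad := ∑ ω : Fin n → S, (if |∑ i, D (ω i)| ≤ n * δ then 0 else ∏ k, w (ω k)) with hBad
  have hsplit : ∑ ω : Fin n → S,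
      (if |∑ i, (g (ω i) - μ)| ≤ n * δ then ∏ k, w (ω k) else 0) = 1 - Bad := by
    rw [hBad, ← htot, ← Finset.sum_sub_distrib]
    refine Finset.sum_congr rfl fun ω _ => ?_
    by_cases h : |∑ i, D (ω i)| ≤ n * δ
    · simp only [hD] at h ⊢; rw [if_pos h, if_pos h]; ring
    · simp only [hD] at h ⊢; rw [if_neg h, if_neg h]; ring
  rw [hsplit]
  have hnδ : (0:ℝ) < (n * δ) ^ 2 := pow_pos (mul_pos hnR hδ) 2
  have hkey : Bad * (n * δ) ^ 2 ≤ ε * (n * δ) ^ 2 := by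
    have h1 : Bad * (n * δ) ^ 2 ≤ ∑ ω : Fin n → S, (∏ k, w (ω k)) * (∑ i, D (ω i)) ^ 2 := by
      rw [hBad, Finset.sum_mul]
      refine Finset.sum_le_sum fun ω _ => ?_
      by_cases h : |∑ i, D (ω i)| ≤ n * δ
      · rw [if_pos h, zero_mul]
        exact mul_nonneg (hWnn ω) (sq_nonneg _)
      · rw [if_neg h]
        push_neg at h
        have h2 : (n * δ) ^ 2 ≤ (∑ i, D (ω i)) ^ 2 := by
          have := mul_self_le_mul_self (mul_pos hnR hδ).le h.le
          rw [abs_mul_abs_self] at this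
          simpa [sq] using this
        exact mul_le_mul_of_nonneg_left h2 (hWnn ω)
    have h3 : (n:ℝ) * σ2 ≤ ε * (n * δ) ^ 2 := by nlinarith
    linarith [h1, hvar ▸ h3]
  have hBadε : Bad ≤ ε := le_of_mul_le_mul_right (by linarith [hkey]) hnδ
  linarith

end Aux

/-- The conditional Shannon entropy
`H(Y|X) = −Σ_{x,y} p_X(x) p_{Y|X}(y|x) log₂ p_{Y|X}(y|x)` (with `0·log₂ 0 = 0`). -/
def condShannonEntropy {𝒳 𝒴 : Type*} [Fintype 𝒳] [Fintype 𝒴]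
    (pX : 𝒳 → ℝ) (pYx : 𝒳 → 𝒴 → ℝ) : ℝ :=
  -∑ x, pX x * ∑ y, pYx x y * Real.logb 2 (pYx x y)

/-- Given `x^n`, a sequence `y^n` is conditionally `δ`-typical if all its letters have
positive conditional probability and the conditional sample entropy is within `δ` of
`H(Y|X)`. -/
def IsCondTypical {𝒳 𝒴 : Type*} [Fintype 𝒳] [Fintype 𝒴]
    (pX : 𝒳 → ℝ) (pYx : 𝒳 → 𝒴 → ℝ) (δ : ℝ) {n : ℕ}
    (xs : Fin n → 𝒳) (ys : Fin n → 𝒴) : Prop :=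
  (∀ i, 0 < pYx (xs i) (ys i)) ∧
    |(-(1 / (n : ℝ)) * ∑ i, Real.logb 2 (pYx (xs i) (ys i))) -
        condShannonEntropy pX pYx| ≤ δ

/-- **Conditional weak typicality**: if `(Xᵢ, Yᵢ)` are drawn i.i.d. with `Xᵢ ∼ p_X` and
`Yᵢ ∼ p_{Y|X}(·|Xᵢ)`, then for every `ε, δ > 0` there is `N` such that for all `n ≥ N`
the probability that `Y^n` is conditionally `δ`-typical given `X^n` is at least `1 − ε`. -/
theorem conditional_weak_typicality {𝒳 𝒴 : Type*} [Fintype 𝒳] [Fintype 𝒴]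
    (pX : 𝒳 → ℝ) (hpX : ∀ x, 0 ≤ pX x) (hpX1 : ∑ x, pX x = 1)
    (pYx : 𝒳 → 𝒴 → ℝ) (hpYx : ∀ x y, 0 ≤ pYx x y) (hpYx1 : ∀ x, ∑ y, pYx x y = 1)
    (ε δ : ℝ) (hε : 0 < ε) (hδ : 0 < δ) :
    ∃ N : ℕ, ∀ n ≥ N,
      1 - ε ≤ ∑ xs : Fin n → 𝒳, ∑ ys : Fin n → 𝒴,
        (if IsCondTypical pX pYx δ xs ys then ∏ i, pX (xs i) * pYx (xs i) (ys i)
         else 0) := by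
  set w : 𝒳 × 𝒴 → ℝ := fun s => pX s.1 * pYx s.1 s.2 with hwdef
  set g : 𝒳 × 𝒴 → ℝ := fun s => -(Real.logb 2 (pYx s.1 s.2)) with hgdef
  have hw0 : ∀ s, 0 ≤ w s := fun s => mul_nonneg (hpX s.1) (hpYx s.1 s.2)
  have hw : ∑ s, w s = 1 := by
    rw [Fintype.sum_prod_type]
    simp only [hwdef, ← Finset.mul_sum]
    simp [hpYx1, hpX1]
  have hμeq : ∑ s, w s * g s = condShannonEntropy pX pYx := by
    rw [Fintype.sum_prod_type, condShannonEntropy, ← Finset.sum_neg_distrib]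
    refine Finset.sum_congr rfl fun x _ => ?_
    rw [Finset.mul_sum, ← Finset.sum_neg_distrib]
    exact Finset.sum_congr rfl fun y _ => by simp [hwdef, hgdef]; ring
  obtain ⟨N, hN1, hNP⟩ := weak_lln w g hw0 hw ε δ hε hδ
  refine ⟨N, fun n hn => ?_⟩
  have hn1 : 1 ≤ n := le_trans hN1 hn
  have hnR : (0:ℝ) < n := by exact_mod_cast hn1
  have key := hNP n hn
  rw [hμeq] at key
  refine le_trans key (le_of_eq ?_)
  have sum_eq : (∑ xs : Fin n → 𝒳, ∑ ys : Fin n → 𝒴,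
        (if IsCondTypical pX pYx δ xs ys then ∏ i, pX (xs i) * pYx (xs i) (ys i) else 0))
      = ∑ ω : Fin n → 𝒳 × 𝒴,
        (if IsCondTypical pX pYx δ (fun i => (ω i).1) (fun i => (ω i).2)
         then ∏ i, pX ((ω i).1) * pYx ((ω i).1) ((ω i).2) else 0) := by
    have e2 : (∑ p : (Fin n → 𝒳) × (Fin n → 𝒴),
        (if IsCondTypical pX pYx δ p.1 p.2 then ∏ i, pX (p.1 i) * pYx (p.1 i) (p.2 i) else 0))
        = ∑ xs : Fin n → 𝒳, ∑ ys : Fin n → 𝒴,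
        (if IsCondTypical pX pYx δ xs ys then ∏ i, pX (xs i) * pYx (xs i) (ys i) else 0) :=
      Fintype.sum_prod_type _
    rw [← e2]
    exact (Fintype.sum_equiv (Equiv.arrowProdEquivProdArrow (Fin n) (fun _ => 𝒳) (fun _ => 𝒴)) _ _
      fun ω => rfl).symm
  rw [sum_eq]
  symm
  refine Finset.sum_congr rfl fun ω _ => ?_
  set xs : Fin n → 𝒳 := fun i => (ω i).1
  set ys : Fin n → 𝒴 := fun i => (ω i).2
  by_cases hpos : ∀ i, 0 < pYx (xs i) (ys i)
  · -- conditions are equivalent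
    have hiff : IsCondTypical pX pYx δ xs ys ↔
        |∑ i, (g (ω i) - condShannonEntropy pX pYx)| ≤ n * δ := by
      rw [IsCondTypical]
      have h1 : (-(1 / (n:ℝ)) * ∑ i, Real.logb 2 (pYx (xs i) (ys i))) -
          condShannonEntropy pX pYx
          = (1 / n) * ∑ i, (g (ω i) - condShannonEntropy pX pYx) := by
        rw [Finset.sum_sub_distrib, Finset.sum_const, Finset.card_univ,
          Fintype.card_fin, nsmul_eq_mul]
        have hg : ∑ i, g (ω i) = -∑ i, Real.logb 2 (pYx (xs i) (ys i)) := by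
          simp [hgdef]; rfl
        rw [hg]
        field_simp
      rw [h1, abs_mul, abs_of_pos (by positivity : (0:ℝ) < 1 / (n:ℝ)),
        one_div, inv_mul_le_iff₀ hnR]
      exact and_iff_right hpos
    rw [if_congr hiff rfl rfl]
  · -- some pYx = 0; both sides are 0
    push_neg at hpos
    obtain ⟨i, hi⟩ := hpos
    have hi0 : pYx (xs i) (ys i) = 0 := le_antisymm hi (hpYx _ _)
    have hW : (∏ k, w (ω k)) = 0 :=
      Finset.prod_eq_zero (Finset.mem_univ i) (by simp [hwdef, hi0]; exact Or.inr hi0)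
    have hW' : (∏ i, pX (xs i) * pYx (xs i) (ys i)) = 0 :=
      Finset.prod_eq_zero (Finset.mem_univ i) (by simp [hi0])
    have hnt : ¬ IsCondTypical pX pYx δ xs ys := by
      intro h
      exact absurd (h.1 i) (by simp [hi0])
    rw [if_neg hnt, hW, ite_self]
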